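/- For all real numbers 0 < m ≤ M < ∞ and all t ≥ 2, there exists a positive constant C such that for all a with m ≤ a ≤ M and all b ≥ -a, one has (t-1)·a^{t-2}·b² ≤ (a+b)^t − a^t − t·a^{t-1}·b ≤ C·b²·(1 + |b|^{t-2}). -/

import Mathlib

open Real

/-- difference bound from above: `v^p - u^p ≤ p v^{p-1} (v-u)`. -/
lemma lemA (u v p : ℝ) (hu : 0 ≤ u) (huv : u ≤ v) (hp : 1 ≤ p) :
    v ^ p - u ^ p ≤ p * v ^ (p - 1) * (v - u) := by
  rcases eq_or_lt_of_le (hu.trans huv) with hv | hv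
  · have hu0 : u = 0 := le_antisymm (huv.trans hv.symm.le) hu
    simp [← hv, hu0, Real.zero_rpow (by linarith : p ≠ 0)]
  · set s : ℝ := u / v with hs
    have hs0 : 0 ≤ s := div_nonneg hu hv.le
    have hs1 : s ≤ 1 := (div_le_one hv).mpr huv
    have hb : 1 + p * (s - 1) ≤ (1 + (s - 1)) ^ p :=
      one_add_mul_self_le_rpow_one_add (by linarith) hp
    rw [add_sub_cancel] at hb
    have hvp : (0:ℝ) < v ^ p := Real.rpow_pos_of_pos hv p
    have hmul : v ^ p * (1 + p * (s - 1)) ≤ v ^ p * s ^ p :=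
      mul_le_mul_of_nonneg_left hb hvp.le
    have hsv : v ^ p * s ^ p = u ^ p := by
      rw [← Real.mul_rpow hv.le hs0, mul_div_cancel₀ u (ne_of_gt hv)]
    have hvp1 : v ^ p = v ^ (p - 1) * v := by
      rw [← Real.rpow_add_one (ne_of_gt hv)]; ring_nf
    have hvs : v * s = u := mul_div_cancel₀ u (ne_of_gt hv)
    have hkey : v ^ p * s = v ^ (p - 1) * u := by
      rw [hvp1, mul_assoc, hvs]
    have hmul' : v ^ p + p * (v ^ p * s) - p * v ^ p ≤ u ^ p := by
      calc v ^ p + p * (v ^ p * s) - p * v ^ p = v ^ p * (1 + p * (s - 1)) := by ring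
        _ ≤ v ^ p * s ^ p := hmul
        _ = u ^ p := hsv
    have hfin : p * v ^ (p - 1) * (v - u) = p * v ^ p - p * (v ^ p * s) := by
      clear_value s
      linear_combination (-p) * hvp1 + p * hkey
    linarith [hmul', hfin]

/-- difference bound from below: `p u^{p-1} (v-u) ≤ v^p - u^p`. -/
lemma lemB (u v p : ℝ) (hu : 0 ≤ u) (huv : u ≤ v) (hp : 1 ≤ p) :
    p * u ^ (p - 1) * (v - u) ≤ v ^ p - u ^ p := by
  rcases eq_or_lt_of_le hu with hu0 | hu0
  · rcases eq_or_lt_of_le hp with hp1 | hp1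
    · simp [← hu0, ← hp1]
    · simp only [← hu0, Real.zero_rpow (by linarith : p ≠ 0),
        Real.zero_rpow (by linarith : p - 1 ≠ 0), mul_zero, zero_mul, sub_zero]
      have := Real.rpow_nonneg (show (0:ℝ) ≤ v by linarith) p
      linarith
  · have hb : 1 + p * ((v - u) / u) ≤ (1 + (v - u) / u) ^ p :=
      one_add_mul_self_le_rpow_one_add
        (by have : (0:ℝ) ≤ (v - u) / u := div_nonneg (by linarith) hu0.le
            linarith) hp
    have h1 : 1 + (v - u) / u = v / u := by field_simp; ring
    rw [h1] at hb
    have hdiv : (v / u) ^ p = v ^ p / u ^ p :=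
      Real.div_rpow (hu0.le.trans huv) hu0.le p
    rw [hdiv] at hb
    have hup : (0:ℝ) < u ^ p := Real.rpow_pos_of_pos hu0 p
    have hmul : u ^ p * (1 + p * ((v - u) / u)) ≤ u ^ p * (v ^ p / u ^ p) :=
      mul_le_mul_of_nonneg_left hb hup.le
    have h2 : u ^ p * (v ^ p / u ^ p) = v ^ p := by field_simp
    have hup1 : u ^ p = u ^ (p - 1) * u := by
      rw [← Real.rpow_add_one (ne_of_gt hu0)]; ring_nf
    have h3 : u ^ p * (p * ((v - u) / u)) = p * u ^ (p - 1) * (v - u) := by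
      rw [hup1]; field_simp
    have : u ^ p + p * u ^ (p - 1) * (v - u) ≤ v ^ p := by
      calc u ^ p + p * u ^ (p - 1) * (v - u)
          = u ^ p * (1 + p * ((v - u) / u)) := by rw [← h3]; ring
        _ ≤ u ^ p * (v ^ p / u ^ p) := hmul
        _ = v ^ p := h2
    linarith

/-- tangent line bound: `a^p + p a^{p-1} b ≤ (a+b)^p`. -/
lemma lemC (a b p : ℝ) (ha : 0 < a) (hb : -a ≤ b) (hp : 1 ≤ p) :
    a ^ p + p * a ^ (p - 1) * b ≤ (a + b) ^ p := by
  rcases le_or_gt 0 b with hb0 | hb0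
  · have h := lemB a (a + b) p ha.le (by linarith) hp
    have : a + b - a = b := by ring
    rw [this] at h; linarith
  · have h := lemA (a + b) a p (by linarith) (by linarith) hp
    have : a - (a + b) = -b := by ring
    rw [this] at h; nlinarith [h]

/-- `(x+y)^q ≤ 2^q (x^q + y^q)` for `q ≥ 0`, `x, y ≥ 0`. -/
lemma lemD (x y q : ℝ) (hx : 0 ≤ x) (hy : 0 ≤ y) (hq : 0 ≤ q) :
    (x + y) ^ q ≤ 2 ^ q * (x ^ q + y ^ q) := by
  have h1 : x + y ≤ 2 * max x y := by
    rcases max_cases x y with ⟨h, h'⟩ | ⟨h, h'⟩ <;> rw [h] <;> linarith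
  have h2 : (x + y) ^ q ≤ (2 * max x y) ^ q :=
    Real.rpow_le_rpow (by linarith) h1 hq
  have h3 : (2 * max x y : ℝ) ^ q = 2 ^ q * (max x y) ^ q :=
    Real.mul_rpow (by norm_num) (le_max_of_le_left hx)
  have h4 : (max x y) ^ q ≤ x ^ q + y ^ q := by
    rcases max_cases x y with ⟨h, _⟩ | ⟨h, _⟩ <;> rw [h]
    · nlinarith [Real.rpow_nonneg hy q]
    · nlinarith [Real.rpow_nonneg hx q]
  calc (x + y) ^ q ≤ 2 ^ q * (max x y) ^ q := by rw [← h3]; exact h2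
    _ ≤ 2 ^ q * (x ^ q + y ^ q) := by
        have : (0:ℝ) ≤ (2:ℝ) ^ q := Real.rpow_nonneg (by norm_num) q
        nlinarith

set_option maxHeartbeats 1600000

/-- Taylor-type two-sided bound for the convex power function `x ↦ x^t` on `[0,∞)`,
with real exponent `t ≥ 2`. -/
theorem taylor_power_two_sided_bound
    (m M : ℝ) (hm : 0 < m) (hmM : m ≤ M) (t : ℝ) (ht : 2 ≤ t) :
    ∃ C : ℝ, 0 < C ∧ ∀ a b : ℝ, m ≤ a → a ≤ M → -a ≤ b →
      (t - 1) * a ^ (t - 2) * b ^ 2 ≤ (a + b) ^ t - a ^ t - t * a ^ (t - 1) * b ∧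
      (a + b) ^ t - a ^ t - t * a ^ (t - 1) * b ≤ C * b ^ 2 * (1 + |b| ^ (t - 2)) := by
  set M' : ℝ := max M 1 with hM'
  have hM'pos : (0:ℝ) < M' := lt_max_of_lt_right one_pos
  have hM'1 : (1:ℝ) ≤ M' := le_max_right _ _
  have ht2 : (0:ℝ) ≤ t - 2 := by linarith
  have h2q : (1:ℝ) ≤ (2:ℝ) ^ (t - 2) := by
    calc (1:ℝ) = (2:ℝ) ^ (0:ℝ) := by norm_num
      _ ≤ (2:ℝ) ^ (t - 2) := Real.rpow_le_rpow_of_exponent_le (by norm_num) ht2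
  have hM'q : (1:ℝ) ≤ M' ^ (t - 2) := by
    calc (1:ℝ) = (1:ℝ) ^ (t - 2) := (Real.one_rpow _).symm
      _ ≤ M' ^ (t - 2) := Real.rpow_le_rpow (by norm_num) hM'1 ht2
  refine ⟨t * (t - 1) * M' ^ (t - 2) * 2 ^ (t - 2),
    mul_pos (mul_pos (mul_pos (by linarith) (by linarith)) (by linarith)) (by linarith), ?_⟩
  intro a b hma haM hba
  have ha : 0 < a := lt_of_lt_of_le hm hma
  have hab : (0:ℝ) ≤ a + b := by linarith
  -- rpow algebra facts
  have e4 : a ^ (t - 2) * a = a ^ (t - 1) := by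
    rw [← Real.rpow_add_one (ne_of_gt ha)]; ring_nf
  have e5 : a ^ (t - 1) * a = a ^ t := by
    rw [← Real.rpow_add_one (ne_of_gt ha)]; ring_nf
  have hA2 : (0:ℝ) ≤ a ^ (t - 2) := Real.rpow_nonneg ha.le _
  constructor
  · -- LOWER BOUND
    set p : ℝ := t / 2 with hp
    have hp1 : (1:ℝ) ≤ p := by rw [hp]; linarith
    rcases le_or_gt 0 (a + p * b) with hcase | hcase
    · -- squared Bernoulli
      have hC := lemC a b p ha hba hp1
      have hR : (0:ℝ) ≤ a ^ p + p * a ^ (p - 1) * b := by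
        have hap : a ^ p = a ^ (p - 1) * a := by
          rw [← Real.rpow_add_one (ne_of_gt ha)]; ring_nf
        have hpos : (0:ℝ) < a ^ (p - 1) := Real.rpow_pos_of_pos ha _
        have : a ^ p + p * a ^ (p - 1) * b = a ^ (p - 1) * (a + p * b) := by
          rw [hap]; ring
        rw [this]
        exact mul_nonneg hpos.le hcase
      have habp : (0:ℝ) ≤ (a + b) ^ p := Real.rpow_nonneg hab _
      have hsq : (a ^ p + p * a ^ (p - 1) * b) * (a ^ p + p * a ^ (p - 1) * b)
          ≤ (a + b) ^ p * (a + b) ^ p := mul_le_mul hC hC hR habp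
      have hpp : p + p = t := by rw [hp]; ring
      have hpp1 : p + (p - 1) = t - 1 := by rw [hp]; ring
      have hpp2 : (p - 1) + (p - 1) = t - 2 := by rw [hp]; ring
      have et : (a + b) ^ p * (a + b) ^ p = (a + b) ^ t := by
        rw [← Real.rpow_add_of_nonneg hab (by linarith) (by linarith), hpp]
      have e1 : a ^ p * a ^ p = a ^ t := by
        rw [← Real.rpow_add ha, hpp]
      have e2 : a ^ p * a ^ (p - 1) = a ^ (t - 1) := by
        rw [← Real.rpow_add ha, hpp1]
      have e3 : a ^ (p - 1) * a ^ (p - 1) = a ^ (t - 2) := by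
        rw [← Real.rpow_add ha, hpp2]
      have hexp : (a ^ p + p * a ^ (p - 1) * b) * (a ^ p + p * a ^ (p - 1) * b)
          = a ^ t + t * a ^ (t - 1) * b + (t ^ 2 / 4) * a ^ (t - 2) * b ^ 2 := by
        have : (a ^ p + p * a ^ (p - 1) * b) * (a ^ p + p * a ^ (p - 1) * b)
            = a ^ p * a ^ p + 2 * p * (a ^ p * a ^ (p - 1)) * b
              + p ^ 2 * (a ^ (p - 1) * a ^ (p - 1)) * b ^ 2 := by ring
        rw [this, e1, e2, e3]
        rw [hp]; ring
      rw [et, hexp] at hsq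
      nlinarith [hsq, sq_nonneg (t - 2), sq_nonneg b, mul_nonneg hA2 (sq_nonneg b),
        mul_nonneg (mul_nonneg hA2 (sq_nonneg b)) (sq_nonneg (t - 2))]
    · -- RHS of lower bound is ≤ 0
      rw [hp] at hcase
      have hb0 : b < 0 := by nlinarith
      have hkey : (t - 1) * a ^ (t - 2) * b ^ 2 + a ^ t + t * a ^ (t - 1) * b
          = a ^ (t - 2) * ((a + b) * (a + (t - 1) * b)) := by
        rw [← e5, ← e4]; ring
      have h1 : a + (t - 1) * b ≤ 0 := by nlinarith
      have h2 : a ^ (t - 2) * ((a + b) * (a + (t - 1) * b)) ≤ 0 :=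
        mul_nonpos_of_nonneg_of_nonpos hA2 (mul_nonpos_of_nonneg_of_nonpos hab h1)
      have h3 : (0:ℝ) ≤ (a + b) ^ t := Real.rpow_nonneg hab _
      linarith [hkey ▸ h2]
  · -- UPPER BOUND
    have ht1 : (1:ℝ) ≤ t - 1 := by linarith
    rcases le_or_gt 0 b with hb0 | hb0
    · -- b ≥ 0
      have h1 := lemA a (a + b) t ha.le (by linarith) (by linarith)
      have h2 := lemA a (a + b) (t - 1) ha.le (by linarith) ht1
      have hsub : a + b - a = b := by ring
      have hexp : t - 1 - 1 = t - 2 := by ring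
      rw [hsub] at h1
      rw [hsub, hexp] at h2
      -- h1 : (a+b)^t - a^t ≤ t * (a+b)^(t-1) * b
      -- h2 : (a+b)^(t-1) - a^(t-1) ≤ (t-1) * (a+b)^(t-2) * b
      have step1 : (a + b) ^ t - a ^ t - t * a ^ (t - 1) * b
          ≤ t * (t - 1) * (a + b) ^ (t - 2) * b ^ 2 := by
        have htb : (0:ℝ) ≤ t * b := mul_nonneg (by linarith) hb0
        have h3 := mul_le_mul_of_nonneg_left h2 htb
        nlinarith [h1, h3]
        -- XX
      -- bound (a+b)^(t-2)
      have hb1 : a + b ≤ M' * (1 + b) := by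
        have hMM' : M ≤ M' := le_max_left _ _
        have hbb : 1 * b ≤ M' * b := mul_le_mul_of_nonneg_right hM'1 hb0
        nlinarith [hbb]
      have hb2 : (a + b) ^ (t - 2) ≤ (M' * (1 + b)) ^ (t - 2) :=
        Real.rpow_le_rpow hab hb1 ht2
      have hb3 : (M' * (1 + b)) ^ (t - 2) = M' ^ (t - 2) * (1 + b) ^ (t - 2) :=
        Real.mul_rpow hM'pos.le (by linarith)
      have hb4 : (1 + b) ^ (t - 2) ≤ 2 ^ (t - 2) * (1 ^ (t - 2) + b ^ (t - 2)) :=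
        lemD 1 b (t - 2) (by norm_num) hb0 ht2
      rw [Real.one_rpow] at hb4
      have habs : |b| = b := abs_of_nonneg hb0
      have hM'q0 : (0:ℝ) ≤ M' ^ (t - 2) := by linarith
      have h2q0 : (0:ℝ) ≤ (2:ℝ) ^ (t - 2) := by linarith
      have hfin : (a + b) ^ (t - 2) ≤ M' ^ (t - 2) * (2 ^ (t - 2) * (1 + b ^ (t - 2))) := by
        calc (a + b) ^ (t - 2) ≤ M' ^ (t - 2) * (1 + b) ^ (t - 2) := by rw [← hb3]; exact hb2
          _ ≤ M' ^ (t - 2) * (2 ^ (t - 2) * (1 + b ^ (t - 2))) :=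
            mul_le_mul_of_nonneg_left hb4 hM'q0
      rw [habs]
      have htt : (0:ℝ) ≤ t * (t - 1) * b ^ 2 :=
        mul_nonneg (mul_nonneg (by linarith) (by linarith)) (sq_nonneg b)
      calc (a + b) ^ t - a ^ t - t * a ^ (t - 1) * b
          ≤ t * (t - 1) * (a + b) ^ (t - 2) * b ^ 2 := step1
        _ = (t * (t - 1) * b ^ 2) * (a + b) ^ (t - 2) := by ring
        _ ≤ (t * (t - 1) * b ^ 2) * (M' ^ (t - 2) * (2 ^ (t - 2) * (1 + b ^ (t - 2)))) :=
            mul_le_mul_of_nonneg_left hfin htt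
        _ = t * (t - 1) * M' ^ (t - 2) * 2 ^ (t - 2) * b ^ 2 * (1 + b ^ (t - 2)) := by ring
    · -- b < 0
      have h1 := lemB (a + b) a t hab (by linarith) (by linarith)
      have h2 := lemA (a + b) a (t - 1) hab (by linarith) ht1
      have hsub : a - (a + b) = -b := by ring
      have hexp : t - 1 - 1 = t - 2 := by ring
      rw [hsub] at h1 h2
      rw [hexp] at h2
      -- h1 : t * (a+b)^(t-1) * (-b) ≤ a^t - (a+b)^t
      -- h2 : a^(t-1) - (a+b)^(t-1) ≤ (t-1) * a^(t-2) * (-b)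
      have step1 : (a + b) ^ t - a ^ t - t * a ^ (t - 1) * b
          ≤ t * (t - 1) * a ^ (t - 2) * b ^ 2 := by
        have htb : (0:ℝ) ≤ t * (-b) := mul_nonneg (by linarith) (by linarith)
        have h3 := mul_le_mul_of_nonneg_left h2 htb
        nlinarith [h1, h3]
      have haM' : a ^ (t - 2) ≤ M' ^ (t - 2) :=
        Real.rpow_le_rpow ha.le (haM.trans (le_max_left _ _)) ht2
      have habsq : (0:ℝ) ≤ |b| ^ (t - 2) := Real.rpow_nonneg (abs_nonneg b) _
      have hM'q0 : (0:ℝ) ≤ M' ^ (t - 2) := by linarith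
      have haK : a ^ (t - 2) ≤ M' ^ (t - 2) * 2 ^ (t - 2) := by
        have : M' ^ (t - 2) * 1 ≤ M' ^ (t - 2) * 2 ^ (t - 2) :=
          mul_le_mul_of_nonneg_left h2q hM'q0
        linarith
      have htt : (0:ℝ) ≤ t * (t - 1) * b ^ 2 :=
        mul_nonneg (mul_nonneg (by linarith) (by linarith)) (sq_nonneg b)
      have hCb : t * (t - 1) * a ^ (t - 2) * b ^ 2
          ≤ t * (t - 1) * M' ^ (t - 2) * 2 ^ (t - 2) * b ^ 2 := by
        have := mul_le_mul_of_nonneg_left haK htt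
        nlinarith [this]
      have hCpos : (0:ℝ) ≤ t * (t - 1) * M' ^ (t - 2) * 2 ^ (t - 2) * b ^ 2 := by
        nlinarith [htt, haK, hA2, mul_le_mul_of_nonneg_left haK htt,
          mul_nonneg htt hA2]
      nlinarith [step1, hCb, mul_nonneg hCpos habsq]
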